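/- For every 2-colouring of the edges of a connected graph G, if every colouring yields a red cycle (of any length) or a blue path on n vertices, then G has at least 2(n−1) edges. Consequently, for any positive real c, the size-Ramsey number R̂(C_{≤cn}, P_n) is at least 2(n−1). -/

import Mathlib

open SimpleGraph Finset Real

/-- There is a blue path on `n` vertices (all edges coloured `false` = blue). -/
def hasBluePath {V : Type*} (G : SimpleGraph V) (red : Sym2 V → Bool) (n : ℕ) : Prop :=
  ∃ (u v : V) (p : G.Walk u v), p.IsPath ∧ p.length + 1 = n ∧ ∀ e ∈ p.edges, red e = false

/-- There is a red cycle of length at most `L`. -/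
def hasRedCycleLe {V : Type*} (G : SimpleGraph V) (red : Sym2 V → Bool) (L : ℝ) : Prop :=
  ∃ (u : V) (p : G.Walk u u), p.IsCycle ∧ (p.length : ℝ) ≤ L ∧ ∀ e ∈ p.edges, red e = true

/-- There is a red cycle (of any length). -/
def hasRedCycle {V : Type*} (G : SimpleGraph V) (red : Sym2 V → Bool) : Prop :=
  ∃ (u : V) (p : G.Walk u u), p.IsCycle ∧ ∀ e ∈ p.edges, red e = true


/-- A cycle's edges cannot all lie among the edges of a path. -/
lemma cycle_not_in_path {V : Type*} [DecidableEq V] {G : SimpleGraph V} {x : V}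
    (q : G.Walk x x) (hq : q.IsCycle) :
    ∀ {a b : V} (p : G.Walk a b), p.IsPath → (∀ e ∈ q.edges, e ∈ p.edges) → False := by
  intro a b p
  induction p with
  | nil =>
    intro _ hsub
    have h3 := hq.three_le_length
    have hne : q.edges ≠ [] := by
      intro h
      have := q.length_edges
      rw [h] at this
      simp at this
      omega
    obtain ⟨e, he⟩ := List.exists_mem_of_ne_nil _ hne
    simpa using hsub e he
  | @cons u v w h p' ih =>
    intro hp hsub
    rw [SimpleGraph.Walk.cons_isPath_iff] at hp
    by_cases he : s(u, v) ∈ q.edges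
    · -- u is on the cycle; get two distinct cycle edges containing u
      have hu : u ∈ q.support := q.fst_mem_support_of_mem_edges he
      obtain ⟨q₁, hc, hedges⟩ : ∃ q₁ : G.Walk u u, q₁.IsCycle ∧ ∀ e ∈ q₁.edges, e ∈ q.edges :=
        ⟨q.rotate u hu, hq.rotate hu, fun e he' => ((q.rotate_edges u hu).mem_iff).mp he'⟩
      cases q₁ with
      | nil => exact SimpleGraph.Walk.IsCycle.not_of_nil hc
      | @cons _ d _ h₂ r =>
        rw [SimpleGraph.Walk.cons_isCycle_iff] at hc
        obtain ⟨d₂, h₃, r₂, hr⟩ := SimpleGraph.Walk.exists_eq_cons_of_ne h₂.ne r.reverse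
        have hE2r : s(u, d₂) ∈ r.edges := by
          have : s(u, d₂) ∈ r.reverse.edges := by rw [hr]; simp
          rwa [SimpleGraph.Walk.edges_reverse, List.mem_reverse] at this
        have hE1 : s(u, d) ∈ q.edges := hedges _ (by simp)
        have hE2 : s(u, d₂) ∈ q.edges := hedges _ (by simp [hE2r])
        have hne12 : s(u, d) ≠ s(u, d₂) := fun hEq => hc.2 (hEq ▸ hE2r)
        have key : ∀ z : V, s(u, z) ∈ q.edges → s(u, z) = s(u, v) := by
          intro z hz
          have := hsub _ hz
          rw [SimpleGraph.Walk.edges_cons, List.mem_cons] at this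
          rcases this with h' | h'
          · exact h'
          · exact absurd (p'.fst_mem_support_of_mem_edges h') hp.2
        exact hne12 ((key d hE1).trans (key d₂ hE2).symm)
    · refine ih hp.1 fun e he' => ?_
      have := hsub e he'
      rw [SimpleGraph.Walk.edges_cons, List.mem_cons] at this
      rcases this with h' | h'
      · exact absurd (h' ▸ he') he
      · exact h'

lemma main_bound {V : Type} [Fintype V] [DecidableEq V] (G : SimpleGraph V)
    [DecidableRel G.Adj] (n : ℕ)
    (H : ∀ red : Sym2 V → Bool, hasRedCycle G red ∨ hasBluePath G red n) :
    2 * (n - 1) ≤ G.edgeFinset.card := by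
  -- first, colour everything blue to get a blue path p0
  obtain ⟨u₀, p₀, hcyc⟩ | ⟨u, v, p0, hp0, hlen0, _⟩ := H (fun _ => false)
  · obtain ⟨hcyc, hcol⟩ := hcyc
    have h3 := hcyc.three_le_length
    have hne : p₀.edges ≠ [] := by
      intro h; have := p₀.length_edges; rw [h] at this; simp at this; omega
    obtain ⟨e, he⟩ := List.exists_mem_of_ne_nil _ hne
    simpa using hcol e he
  · -- colour p0's edges red
    obtain ⟨u₁, p₁, hcyc⟩ | ⟨u', v', p1, hp1, hlen1, hblue⟩ :=
      H (fun e => decide (e ∈ p0.edges))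
    · obtain ⟨hcyc, hcol⟩ := hcyc
      exact (cycle_not_in_path p₁ hcyc p0 hp0 (fun e he => by simpa using hcol e he)).elim
    · have hdisj : Disjoint p0.edges.toFinset p1.edges.toFinset := by
        rw [Finset.disjoint_left]
        intro e he0 he1
        rw [List.mem_toFinset] at he0 he1
        have := hblue e he1
        simp at this
        exact this he0
      have hc0 : p0.edges.toFinset.card = n - 1 := by
        rw [List.toFinset_card_of_nodup hp0.edges_nodup, p0.length_edges]; omega
      have hc1 : p1.edges.toFinset.card = n - 1 := by
        rw [List.toFinset_card_of_nodup hp1.edges_nodup, p1.length_edges]; omega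
      have hsub : p0.edges.toFinset ∪ p1.edges.toFinset ⊆ G.edgeFinset := by
        intro e he
        rw [Finset.mem_union, List.mem_toFinset, List.mem_toFinset] at he
        rw [SimpleGraph.mem_edgeFinset]
        rcases he with h' | h'
        · exact p0.edges_subset_edgeSet h'
        · exact p1.edges_subset_edgeSet h'
      calc 2 * (n - 1) = p0.edges.toFinset.card + p1.edges.toFinset.card := by omega
        _ = (p0.edges.toFinset ∪ p1.edges.toFinset).card :=
            (Finset.card_union_of_disjoint hdisj).symm
        _ ≤ G.edgeFinset.card := Finset.card_le_card hsub

theorem stmt2 (c : ℝ) (hc : 0 < c) (n : ℕ) :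
    (∀ (V : Type) [Fintype V] [DecidableEq V] (G : SimpleGraph V) [DecidableRel G.Adj],
      G.Connected →
      (∀ red : Sym2 V → Bool, hasRedCycle G red ∨ hasBluePath G red n) →
      2 * (n - 1) ≤ G.edgeFinset.card) ∧
    (∀ (V : Type) [Fintype V] [DecidableEq V] (G : SimpleGraph V) [DecidableRel G.Adj],
      (∀ red : Sym2 V → Bool, hasRedCycleLe G red (c * n) ∨ hasBluePath G red n) →
      2 * (n - 1) ≤ G.edgeFinset.card) := by
  constructor
  · intro V _ _ G _ _ H
    exact main_bound G n H
  · intro V _ _ G _ H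
    refine main_bound G n fun red => ?_
    rcases H red with ⟨u, p, hcyc, _, hcol⟩ | hb
    · exact Or.inl ⟨u, p, hcyc, hcol⟩
    · exact Or.inr hb
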